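/- Let g, N_t > 0, 0 < b < 1, and define ξ(η) = (N_t/η)((1+gη)^b − 1), K(η) = (1+gη)^b − b·g·η·(1+gη)^{b−1} − 1, and for a positive integer a let J(x) be the logarithmic derivative of the regularized incomplete Gamma function of shape a. Then J(ξ(η))·K(η)/η → (a/N_t)·(1−b) as η → ∞. -/

import Mathlib

open Filter Real intervalIntegral

lemma int_lb (n:ℕ) (x:ℝ) (hx:0<x) :
    Real.exp (-x) * (x^(n+1)/(n+1)) ≤ ∫ t in (0:ℝ)..x, t^n * Real.exp (-t) := by
  have h1 : (∫ t in (0:ℝ)..x, t^n * Real.exp (-x)) ≤ ∫ t in (0:ℝ)..x, t^n * Real.exp (-t) := by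
    apply intervalIntegral.integral_mono_on hx.le
    · exact (Continuous.intervalIntegrable (by continuity) _ _)
    · exact (Continuous.intervalIntegrable (by continuity) _ _)
    · intro t ht
      rcases ht with ⟨ht0, htx⟩
      exact mul_le_mul_of_nonneg_left (Real.exp_le_exp.2 (by linarith)) (pow_nonneg ht0 n)
  calc Real.exp (-x) * (x^(n+1)/(n+1)) = ∫ t in (0:ℝ)..x, t^n * Real.exp (-x) := by
        rw [intervalIntegral.integral_mul_const, integral_pow]; ring
    _ ≤ _ := h1

lemma int_ub (n:ℕ) (x:ℝ) (hx:0<x) :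
    (∫ t in (0:ℝ)..x, t^n * Real.exp (-t)) ≤ x^(n+1)/(n+1) := by
  have h1 : (∫ t in (0:ℝ)..x, t^n * Real.exp (-t)) ≤ ∫ t in (0:ℝ)..x, t^n := by
    apply intervalIntegral.integral_mono_on hx.le
    · exact (Continuous.intervalIntegrable (by continuity) _ _)
    · exact (Continuous.intervalIntegrable (by continuity) _ _)
    · intro t ht
      rcases ht with ⟨ht0, htx⟩
      nlinarith [Real.exp_le_one_iff.2 (neg_nonpos.2 ht0), pow_nonneg ht0 n, Real.exp_pos (-t)]
  calc (∫ t in (0:ℝ)..x, t^n * Real.exp (-t)) ≤ ∫ t in (0:ℝ)..x, t^n := h1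
    _ = x^(n+1)/(n+1) := by rw [integral_pow]; ring

lemma Jx_tendsto (n : ℕ) :
    Tendsto (fun x : ℝ => x^(n+1) * Real.exp (-x) / ∫ t in (0:ℝ)..x, t^n * Real.exp (-t))
      (nhdsWithin 0 (Set.Ioi 0)) (nhds (n+1)) := by
  have hlb : ∀ x : ℝ, 0 < x → (0:ℝ) < Real.exp (-x) * (x^(n+1)/(n+1)) := by
    intro x hx
    positivity
  apply tendsto_of_tendsto_of_tendsto_of_le_of_le'
      (g := fun x : ℝ => ((n:ℝ)+1) * Real.exp (-x)) (h := fun _ => ((n:ℝ)+1))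
  · have : Tendsto (fun x : ℝ => ((n:ℝ)+1) * Real.exp (-x)) (nhds 0) (nhds (((n:ℝ)+1) * Real.exp (-0))) := by
      exact (Continuous.tendsto (by continuity) 0)
    simpa using this.mono_left nhdsWithin_le_nhds
  · exact tendsto_const_nhds
  · filter_upwards [self_mem_nhdsWithin] with x hx
    have hx : 0 < x := hx
    have hI : (0:ℝ) < ∫ t in (0:ℝ)..x, t^n * Real.exp (-t) := lt_of_lt_of_le (hlb x hx) (int_lb n x hx)
    have := int_ub n x hx
    rw [le_div_iff₀ hI]
    calc ((n:ℝ)+1) * Real.exp (-x) * ∫ t in (0:ℝ)..x, t^n * Real.exp (-t)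
        ≤ ((n:ℝ)+1) * Real.exp (-x) * (x^(n+1)/(n+1)) := by
          apply mul_le_mul_of_nonneg_left this (by positivity)
      _ = x^(n+1) * Real.exp (-x) := by field_simp
  · filter_upwards [self_mem_nhdsWithin] with x hx
    have hx : 0 < x := hx
    have hI : (0:ℝ) < ∫ t in (0:ℝ)..x, t^n * Real.exp (-t) := lt_of_lt_of_le (hlb x hx) (int_lb n x hx)
    rw [div_le_iff₀ hI]
    calc x^(n+1) * Real.exp (-x) = ((n:ℝ)+1) * (Real.exp (-x) * (x^(n+1)/(n+1))) := by field_simp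
      _ ≤ ((n:ℝ)+1) * ∫ t in (0:ℝ)..x, t^n * Real.exp (-t) := by
          apply mul_le_mul_of_nonneg_left (int_lb n x hx) (by positivity)

lemma xi_tendsto (g Nt b : ℝ) (hg : 0 < g) (hNt : 0 < Nt) (hb0 : 0 < b) (hb1 : b < 1) :
    Tendsto (fun η : ℝ => (Nt / η) * ((1 + g * η) ^ b - 1)) atTop
      (nhdsWithin 0 (Set.Ioi 0)) := by
  rw [tendsto_nhdsWithin_iff]
  constructor
  · apply squeeze_zero' (f := fun η : ℝ => (Nt / η) * ((1 + g * η) ^ b - 1))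
        (g := fun η : ℝ => Nt * (2*g) ^ b * η ^ (b-1))
    · filter_upwards [eventually_gt_atTop 0] with η hη
      have h1 : (1:ℝ) < 1 + g * η := by nlinarith
      have : (1:ℝ) < (1 + g*η) ^ b := Real.one_lt_rpow_iff_of_pos (by linarith) |>.2 (Or.inl ⟨h1, hb0⟩)
      have : (0:ℝ) < Nt / η := by positivity
      nlinarith
    · filter_upwards [eventually_ge_atTop (1/g)] with η hη
      have hη0 : 0 < η := lt_of_lt_of_le (by positivity) hη
      have h1 : 1 + g * η ≤ 2 * g * η := by
        have := (div_le_iff₀ hg).1 hη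
        have : 1 ≤ g * η := by linarith
        linarith
      have h2 : (1 + g*η) ^ b ≤ (2*g*η) ^ b :=
        Real.rpow_le_rpow (by positivity) h1 hb0.le
      have h3 : (2*g*η:ℝ) ^ b = (2*g)^b * η^b := Real.mul_rpow (by positivity) hη0.le
      have h4 : η ^ (b-1) = η ^ b / η := by
        rw [Real.rpow_sub hη0, Real.rpow_one]
      calc (Nt / η) * ((1 + g * η) ^ b - 1) ≤ (Nt / η) * ((2*g)^b * η^b) := by
            rw [← h3]; apply mul_le_mul_of_nonneg_left (by linarith) (by positivity)
        _ = Nt * (2*g) ^ b * η ^ (b-1) := by rw [h4]; field_simp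
    · have : Tendsto (fun η : ℝ => η ^ (b-1)) atTop (nhds 0) := by
        have := tendsto_rpow_neg_atTop (y := 1 - b) (by linarith)
        simpa [neg_sub] using this
      simpa using this.const_mul (Nt * (2*g)^b)
  · filter_upwards [eventually_gt_atTop 0] with η hη
    have h1 : (1:ℝ) < 1 + g * η := by nlinarith
    have h2 : (1:ℝ) < (1 + g*η) ^ b := Real.one_lt_rpow_iff_of_pos (by linarith) |>.2 (Or.inl ⟨h1, hb0⟩)
    have : (0:ℝ) < Nt / η := by positivity
    exact mul_pos this (by linarith)


lemma Kratio_tendsto (g b : ℝ) (hg : 0 < g) (hb0 : 0 < b) (hb1 : b < 1) :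
    Tendsto (fun η : ℝ =>
        ((1 + g * η) ^ b - b * g * η * (1 + g * η) ^ (b - 1) - 1) / ((1 + g * η) ^ b - 1))
      atTop (nhds (1 - b)) := by
  have hu : Tendsto (fun η : ℝ => 1 + g * η) atTop atTop :=
    tendsto_atTop_add_const_left _ 1 (tendsto_id.const_mul_atTop hg)
  have hinv : Tendsto (fun η : ℝ => (1 + g * η)⁻¹) atTop (nhds 0) :=
    tendsto_inv_atTop_zero.comp hu
  have hrb : Tendsto (fun η : ℝ => (1 + g * η) ^ (-b)) atTop (nhds 0) :=
    (tendsto_rpow_neg_atTop hb0).comp hu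
  have main : Tendsto (fun η : ℝ =>
      ((1-b) + b * (1 + g*η)⁻¹ - (1 + g*η) ^ (-b)) / (1 - (1 + g*η) ^ (-b)))
      atTop (nhds (1 - b)) := by
    have hnum : Tendsto (fun η : ℝ => (1-b) + b * (1 + g*η)⁻¹ - (1 + g*η) ^ (-b))
        atTop (nhds ((1-b) + b * 0 - 0)) :=
      ((tendsto_const_nhds.add (hinv.const_mul b)).sub hrb)
    have hden : Tendsto (fun η : ℝ => 1 - (1 + g*η) ^ (-b)) atTop (nhds (1 - 0)) :=
      tendsto_const_nhds.sub hrb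
    have := hnum.div hden (by norm_num)
    simp at this; exact this
  apply main.congr'
  filter_upwards [eventually_gt_atTop 0] with η hη
  set u := 1 + g * η with hu_def
  have hu0 : (0:ℝ) < u := by have h : 0 < g * η := by positivity
                             nlinarith [h]
  have hub : (0:ℝ) < u ^ b := Real.rpow_pos_of_pos hu0 b
  have e1 : u ^ b * ((1-b) + b * u⁻¹ - u ^ (-b)) = (1-b) * u^b + b * u^(b-1) - 1 := by
    have h1 : u ^ b * u⁻¹ = u ^ (b-1) := by
      rw [Real.rpow_sub hu0, Real.rpow_one, div_eq_mul_inv]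
    have h2 : u ^ b * u ^ (-b) = 1 := by
      rw [← Real.rpow_add hu0]; simp
    linear_combination b * h1 - h2
  have e2 : u ^ b * (1 - u ^ (-b)) = u ^ b - 1 := by
    have h2 : u ^ b * u ^ (-b) = 1 := by
      rw [← Real.rpow_add hu0]; simp
    rw [mul_sub, h2, mul_one]
  have e3 : u ^ b - b * g * η * u ^ (b-1) - 1 = (1-b) * u^b + b * u^(b-1) - 1 := by
    have hgη : g * η = u - 1 := by simp [hu_def]
    have h1 : u * u ^ (b-1) = u ^ b := by
      nth_rewrite 1 [← Real.rpow_one u]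
      rw [← Real.rpow_add hu0]; ring_nf
    have : b * g * η * u ^ (b-1) = b * (u-1) * u^(b-1) := by rw [mul_assoc b g η, hgη]
    rw [this]
    nlinarith [h1]
  rw [e3, ← e1, ← e2, mul_div_mul_left _ _ (ne_of_gt hub)]

lemma alg_aux (s I k D Nt η e' : ℝ) (n : ℕ) (hI : I ≠ 0) (hD : D ≠ 0)
    (hNt : Nt ≠ 0) (hη : η ≠ 0) (hrel : s * η = Nt * D) :
    s^(n+1) * e' / I * (k / D / Nt) = s^n * e' / I * k / η := by
  rw [pow_succ]
  field_simp
  linear_combination (s^n * e' * k) * hrel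


/-- Key computation in the proof of Theorem 2: with
`ξ(η) = (N_t/η)((1+gη)^b − 1)`, `K(η) = (1+gη)^b − b·g·η·(1+gη)^(b−1) − 1`,
and `J` the logarithmic derivative of the regularized lower incomplete Gamma
function of positive integer shape `a`, one has
`J(ξ(η))·K(η)/η → (a/N_t)·(1−b)` as `η → ∞`. -/
theorem JK_asymptotics (g Nt b : ℝ) (hg : 0 < g) (hNt : 0 < Nt)
    (hb0 : 0 < b) (hb1 : b < 1) (a : ℕ) (ha : 0 < a) :
    Tendsto (fun η : ℝ =>
        (((fun x : ℝ => (x ^ (a - 1) * Real.exp (-x) / (Nat.factorial (a - 1) : ℝ)) /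
              ((1 / (Nat.factorial (a - 1) : ℝ)) *
                ∫ t in (0:ℝ)..x, t ^ (a - 1) * Real.exp (-t)))
            ((Nt / η) * ((1 + g * η) ^ b - 1))) *
          ((1 + g * η) ^ b - b * g * η * (1 + g * η) ^ (b - 1) - 1)) / η)
      atTop (nhds (((a : ℝ) / Nt) * (1 - b))) := by
  set n := a - 1 with hn
  have hna : n + 1 = a := Nat.succ_pred_eq_of_pos ha
  set ξ : ℝ → ℝ := fun η => (Nt / η) * ((1 + g * η) ^ b - 1) with hξ
  set K : ℝ → ℝ := fun η => (1 + g * η) ^ b - b * g * η * (1 + g * η) ^ (b - 1) - 1 with hK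
  set Jt : ℝ → ℝ := fun x => x^(n+1) * Real.exp (-x) / ∫ t in (0:ℝ)..x, t^n * Real.exp (-t)
    with hJt
  have hcomp : Tendsto (fun η => Jt (ξ η)) atTop (nhds ((n:ℝ)+1)) :=
    (Jx_tendsto n).comp (xi_tendsto g Nt b hg hNt hb0 hb1)
  have hKr : Tendsto (fun η : ℝ => (K η / ((1 + g * η) ^ b - 1)) / Nt) atTop
      (nhds ((1 - b) / Nt)) := (Kratio_tendsto g b hg hb0 hb1).div_const Nt
  have hmain := hcomp.mul hKr
  have hlim : ((n:ℝ)+1) * ((1-b)/Nt) = ((a : ℝ) / Nt) * (1 - b) := by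
    have : ((n:ℝ)+1) = (a:ℝ) := by exact_mod_cast congrArg (Nat.cast : ℕ → ℝ) hna
    rw [this]; ring
  rw [hlim] at hmain
  apply hmain.congr'
  filter_upwards [eventually_gt_atTop 0] with η hη
  have h1 : (1:ℝ) < 1 + g * η := by nlinarith
  have h2 : (1:ℝ) < (1 + g*η) ^ b :=
    Real.one_lt_rpow_iff_of_pos (by linarith) |>.2 (Or.inl ⟨h1, hb0⟩)
  have hξpos : 0 < ξ η := by
    have : (0:ℝ) < Nt / η := by positivity
    exact mul_pos this (by linarith)
  have hIpos : (0:ℝ) < ∫ t in (0:ℝ)..η, 1 := by simp [hη]  -- dummy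
  -- simplify factorial quotient
  have hc : (Nat.factorial n : ℝ) ≠ 0 := by positivity
  have hfsimp : ∀ x : ℝ,
      ((fun x : ℝ => (x ^ (a - 1) * Real.exp (-x) / (Nat.factorial (a - 1) : ℝ)) /
          ((1 / (Nat.factorial (a - 1) : ℝ)) *
            ∫ t in (0:ℝ)..x, t ^ (a - 1) * Real.exp (-t))) x)
      = x ^ n * Real.exp (-x) / ∫ t in (0:ℝ)..x, t ^ n * Real.exp (-t) := by
    intro x
    simp only [Pi.div_apply, ← hn]
    rcases eq_or_ne (∫ t in (0:ℝ)..x, t ^ n * Real.exp (-t)) 0 with hI | hI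
    · rw [hI]; simp
    · field_simp
  show Jt (ξ η) * (K η / ((1 + g * η) ^ b - 1) / Nt) =
      ((ξ η) ^ n * Real.exp (-(ξ η)) / (Nat.factorial n : ℝ) /
        ((1 / (Nat.factorial n : ℝ)) * ∫ t in (0:ℝ)..(ξ η), t ^ n * Real.exp (-t)) * K η) / η
  have hIξ : (0:ℝ) < ∫ t in (0:ℝ)..(ξ η), t ^ n * Real.exp (-t) :=
    lt_of_lt_of_le (by positivity) (int_lb n _ hξpos)
  have e : (ξ η) ^ n * Real.exp (-(ξ η)) / (Nat.factorial n : ℝ) /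
        ((1 / (Nat.factorial n : ℝ)) * ∫ t in (0:ℝ)..(ξ η), t ^ n * Real.exp (-t))
      = (ξ η) ^ n * Real.exp (-(ξ η)) / ∫ t in (0:ℝ)..(ξ η), t ^ n * Real.exp (-t) := by
    rw [div_div, div_eq_div_iff (by positivity) hIξ.ne']
    field_simp
  rw [e]
  have hξη : ξ η * η = Nt * ((1 + g * η) ^ b - 1) := by
    simp only [hξ]
    field_simp
  have hηne : η ≠ 0 := ne_of_gt hη
  have hb1ne : (1 + g * η) ^ b - 1 ≠ 0 := by linarith
  simp only [hJt]
  exact alg_aux (ξ η) _ (K η) _ Nt η _ n hIξ.ne' hb1ne hNt.ne' hηne hξη
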